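/- Let V be a real vector space and W an ordered vector space with the interpolation property, and let p : V → W be sublinear. Then for every v ∈ V, p(v) = max { φ(v) : φ : V → W linear, φ ≤ p pointwise }, i.e., there exists a linear φ ≤ p with φ(v) = p(v), and every linear φ ≤ p satisfies φ(v) ≤ p(v). -/

import Mathlib

open Set Submodule

section Aux

variable {V W : Type*}
    [AddCommGroup V] [Module ℝ V]
    [AddCommGroup W] [PartialOrder W] [IsOrderedAddMonoid W] [Module ℝ W] [PosSMulMono ℝ W]

/-- Extension step: a partially defined linear map dominated by `p` whose domain is not
everything can be extended to a strictly larger domain, staying dominated by `p`. -/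
theorem hbk_step
    (hinterp : ∀ A B : Set W, A.Nonempty → B.Nonempty →
      (∀ a ∈ A, ∀ b ∈ B, a ≤ b) → ∃ w : W, (∀ a ∈ A, a ≤ w) ∧ ∀ b ∈ B, w ≤ b)
    (p : V → W)
    (hp_hom : ∀ c : ℝ, 0 ≤ c → ∀ v : V, p (c • v) = c • p v)
    (hp_add : ∀ v₁ v₂ : V, p (v₁ + v₂) ≤ p v₁ + p v₂)
    (f : V →ₗ.[ℝ] W) (hf : ∀ x : f.domain, f x ≤ p x) (hdom : f.domain ≠ ⊤) :
    ∃ g : V →ₗ.[ℝ] W, (∀ x : g.domain, g x ≤ p x) ∧ f < g := by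
  obtain ⟨y, -, hy⟩ : ∃ y ∈ (⊤ : Submodule ℝ V), y ∉ f.domain :=
    SetLike.exists_of_lt (lt_top_iff_ne_top.2 hdom)
  obtain ⟨c, hc1, hc2⟩ : ∃ c : W, (∀ x : f.domain, f x - p ((x : V) - y) ≤ c) ∧
      ∀ x : f.domain, c ≤ p ((x : V) + y) - f x := by
    have hAB : ∀ a ∈ (Set.range fun x : f.domain => f x - p ((x : V) - y)),
        ∀ b ∈ (Set.range fun x : f.domain => p ((x : V) + y) - f x), a ≤ b := by
      rintro a ⟨x, rfl⟩ b ⟨x', rfl⟩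
      rw [sub_le_sub_iff]
      have h2 : f x + f x' ≤ p ((x : V) + (x' : V)) := by
        rw [← f.map_add]
        simpa using hf (x + x')
      have h3 : p ((x : V) + (x' : V)) ≤ p ((x : V) - y) + p ((x' : V) + y) := by
        have := hp_add ((x : V) - y) ((x' : V) + y)
        rwa [sub_add_add_cancel] at this
      calc f x + f x' ≤ p ((x : V) - y) + p ((x' : V) + y) := h2.trans h3
        _ = p ((x' : V) + y) + p ((x : V) - y) := add_comm _ _
    obtain ⟨c, h1, h2⟩ := hinterp
      (Set.range fun x : f.domain => f x - p ((x : V) - y))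
      (Set.range fun x : f.domain => p ((x : V) + y) - f x)
      (Set.range_nonempty _) (Set.range_nonempty _) hAB
    exact ⟨c, fun x => h1 _ ⟨x, rfl⟩, fun x => h2 _ ⟨x, rfl⟩⟩
  refine ⟨f.supSpanSingleton y c hy, ?_, ?_⟩
  · rintro ⟨z, hz⟩
    rcases mem_sup.1 hz with ⟨x, hx, y', hy', rfl⟩
    rcases mem_span_singleton.1 hy' with ⟨r, rfl⟩
    rw [LinearPMap.supSpanSingleton_apply_mk _ _ _ _ _ hx]
    show f ⟨x, hx⟩ + r • c ≤ p (x + r • y)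
    rcases lt_trichotomy r 0 with hr | hr | hr
    · -- r < 0 : use the lower bound `hc1` at `(-r)⁻¹ • x`
      have hs : (0:ℝ) < -r := neg_pos.2 hr
      have h1 := hc1 ((-r)⁻¹ • ⟨x, hx⟩)
      have h2 := smul_le_smul_of_nonneg_left h1 hs.le
      rw [smul_sub] at h2
      have e1 : (-r) • (f ((-r)⁻¹ • (⟨x, hx⟩ : f.domain))) = f ⟨x, hx⟩ := by
        rw [← f.map_smul, smul_smul, mul_inv_cancel₀ hs.ne', one_smul]
      have e2 : (-r) • p ((((-r)⁻¹ • (⟨x, hx⟩ : f.domain) : f.domain) : V) - y)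
          = p (x + r • y) := by
        rw [← hp_hom (-r) hs.le]
        congr 1
        have : (((-r)⁻¹ • (⟨x, hx⟩ : f.domain) : f.domain) : V) = (-r)⁻¹ • x := rfl
        rw [this, smul_sub, smul_smul, mul_inv_cancel₀ hs.ne', one_smul, neg_smul,
          sub_neg_eq_add]
      rw [e1, e2] at h2
      have h3 := sub_le_iff_le_add.mp h2
      calc f ⟨x, hx⟩ + r • c ≤ (-r • c + p (x + r • y)) + r • c := add_le_add_left h3 _
        _ = p (x + r • y) := by rw [neg_smul]; abel
    · simp only [hr, zero_smul, add_zero]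
      exact hf ⟨x, hx⟩
    · have h1 := hc2 (r⁻¹ • ⟨x, hx⟩)
      have h2 := smul_le_smul_of_nonneg_left h1 hr.le
      rw [smul_sub] at h2
      have e1 : r • (f (r⁻¹ • (⟨x, hx⟩ : f.domain))) = f ⟨x, hx⟩ := by
        rw [← f.map_smul, smul_smul, mul_inv_cancel₀ hr.ne', one_smul]
      have e2 : r • p (((r⁻¹ • (⟨x, hx⟩ : f.domain) : f.domain) : V) + y)
          = p (x + r • y) := by
        rw [← hp_hom r hr.le]
        congr 1
        have : ((r⁻¹ • (⟨x, hx⟩ : f.domain) : f.domain) : V) = r⁻¹ • x := rfl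
        rw [this, smul_add, smul_smul, mul_inv_cancel₀ hr.ne', one_smul]
      rw [e1, e2] at h2
      calc f ⟨x, hx⟩ + r • c ≤ f ⟨x, hx⟩ + (p (x + r • y) - f ⟨x, hx⟩) :=
            add_le_add_right h2 _
        _ = p (x + r • y) := by abel
  · refine lt_iff_le_not_ge.2 ⟨f.left_le_sup _ _, fun H => ?_⟩
    replace H := LinearPMap.domain_mono.monotone H
    rw [LinearPMap.domain_supSpanSingleton, sup_le_iff, span_le, singleton_subset_iff] at H
    exact hy H.2

end Aux

theorem sublinear_is_max_of_linear {V W : Type*}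
    [AddCommGroup V] [Module ℝ V]
    [AddCommGroup W] [PartialOrder W] [IsOrderedAddMonoid W] [Module ℝ W] [PosSMulMono ℝ W]
    (hinterp : ∀ A B : Set W, A.Nonempty → B.Nonempty →
      (∀ a ∈ A, ∀ b ∈ B, a ≤ b) → ∃ w : W, (∀ a ∈ A, a ≤ w) ∧ ∀ b ∈ B, w ≤ b)
    (p : V → W)
    (hp_hom : ∀ c : ℝ, 0 ≤ c → ∀ v : V, p (c • v) = c • p v)
    (hp_add : ∀ v₁ v₂ : V, p (v₁ + v₂) ≤ p v₁ + p v₂) :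
    ∀ v : V, (∀ φ : V →ₗ[ℝ] W, (∀ w : V, φ w ≤ p w) → φ v ≤ p v) ∧
      ∃ φ : V →ₗ[ℝ] W, (∀ w : V, φ w ≤ p w) ∧ φ v = p v := by
  intro v
  refine ⟨fun φ h => h v, ?_⟩
  have hp0 : p 0 = 0 := by simpa using hp_hom 0 le_rfl 0
  set S := { f : V →ₗ.[ℝ] W | ∀ x : f.domain, f x ≤ p x } with hSdef
  -- a seed partially defined map sending `v` to `p v`
  obtain ⟨f₀, hf₀S, hv0, hf₀v⟩ :
      ∃ f₀ ∈ S, ∃ hv : v ∈ f₀.domain, f₀ ⟨v, hv⟩ = p v := by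
    by_cases hv : v = 0
    · subst hv
      refine ⟨(0 : V →ₗ[ℝ] W).toPMap ⊥, ?_, Submodule.zero_mem ⊥, ?_⟩
      · rintro ⟨z, hz⟩
        obtain rfl : z = (0 : V) := (Submodule.mem_bot ℝ).1 hz
        simp [LinearMap.toPMap_apply, hp0]
      · simp [LinearMap.toPMap_apply, hp0]
    · refine ⟨LinearPMap.mkSpanSingleton v (p v) hv, ?_,
        Submodule.mem_span_singleton_self v, ?_⟩
      · rintro ⟨z, hz⟩
        rcases Submodule.mem_span_singleton.1 hz with ⟨r, rfl⟩
        rw [LinearPMap.mkSpanSingleton'_apply]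
        show r • p v ≤ p (r • v)
        rcases le_or_gt 0 r with hr | hr
        · rw [hp_hom r hr]
        · have h0 : (0 : W) ≤ p (r • v) + (-r) • p v := by
            have h1 := hp_add (r • v) ((-r) • v)
            rw [hp_hom (-r) (by linarith)] at h1
            have h2 : r • v + (-r) • v = (0 : V) := by
              rw [← add_smul]; simp
            rwa [h2, hp0] at h1
          have h3 : -((-r) • p v) ≤ p (r • v) := neg_le_iff_add_nonneg.2 h0
          rwa [neg_smul, neg_neg] at h3
      · exact LinearPMap.mkSpanSingleton_apply ℝ ℝ hv (p v)
  -- Zorn's lemma: maximal dominated extension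
  have hSc : ∀ c ⊆ S, IsChain (· ≤ ·) c → ∀ y ∈ c, ∃ ub ∈ S, ∀ z ∈ c, z ≤ ub := by
    intro c hcs c_chain y hy
    have cne : c.Nonempty := ⟨y, hy⟩
    have hcd : DirectedOn (· ≤ ·) c := c_chain.directedOn
    refine ⟨LinearPMap.sSup c hcd, ?_, fun z hz => LinearPMap.le_sSup hcd hz⟩
    rintro ⟨x, hx⟩
    have hdir : DirectedOn (· ≤ ·) (LinearPMap.domain '' c) :=
      directedOn_image.2 (hcd.mono LinearPMap.domain_mono.monotone)
    rcases (Submodule.mem_sSup_of_directed (cne.image _) hdir).1 hx with ⟨_, ⟨f, hfc, rfl⟩, hfx⟩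
    have hle : f ≤ LinearPMap.sSup c hcd := LinearPMap.le_sSup _ hfc
    have h := hcs hfc ⟨x, hfx⟩
    rwa [show f ⟨x, hfx⟩ = LinearPMap.sSup c hcd ⟨x, hx⟩ from hle.2 rfl] at h
  obtain ⟨g, hfg, hgS, hgmax⟩ := zorn_le_nonempty₀ S hSc f₀ hf₀S
  have hgtop : g.domain = ⊤ := by
    by_contra h
    obtain ⟨g', hg'S, hlt⟩ := hbk_step hinterp p hp_hom hp_add g hgS h
    exact hlt.not_ge (hgmax hg'S hlt.le)
  have hmem : ∀ x : V, x ∈ g.domain := fun x => by rw [hgtop]; trivial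
  refine ⟨g.toFun.comp (LinearMap.id.codRestrict g.domain fun x => hmem x), fun w => ?_, ?_⟩
  · exact hgS ⟨w, hmem w⟩
  · show g ⟨v, hmem v⟩ = p v
    rw [show f₀ ⟨v, hv0⟩ = g ⟨v, hmem v⟩ from hfg.2 rfl] at hf₀v
    exact hf₀v
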